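/- arXiv:1209.3047 — 2 statements merged into one kernel-verified Lean document; each statement's English description precedes it below -/
import Mathlib

section
/- Let A be M×M Hermitian positive definite, B Hermitian positive semidefinite, and define φ(s) = tr(A (I_M + sA + B)^{-1}) for s > -λ_min, where λ_min is the smallest eigenvalue of A^{-1/2}(I_M + B)A^{-1/2}. Then φ is strictly decreasing on (-λ_min, ∞), φ(s) → +∞ as s → -λ_min⁺, and φ(s) → 0 as s → +∞; hence for every γ > 0 the equation γ = φ(s) has a unique solution s₀ ∈ (-λ_min, ∞). -/
open Matrix Filter Topology ComplexOrder


lemma myPosDef_conj {n : Type*} [Fintype n] [DecidableEq n]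
    {A : Matrix n n ℂ} (hA : A.PosDef) {B : Matrix n n ℂ} (hB : IsUnit B) :
    (Bᴴ * A * B).PosDef := by
  rw [posDef_iff_dotProduct_mulVec] at hA ⊢
  refine ⟨Matrix.isHermitian_conjTranspose_mul_mul B hA.1, fun x hx => ?_⟩
  have hBx : B *ᵥ x ≠ 0 := fun h => hx <| by
    have := (Matrix.mulVec_injective_iff_isUnit.mpr hB) (a₁ := x) (a₂ := 0)
    simpa [h] using this
  simpa only [star_mulVec, dotProduct_mulVec, vecMul_vecMul] using hA.2 (x := B *ᵥ x) hBx

lemma myPosDef_conj_iff {n : Type*} [Fintype n] [DecidableEq n]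
    {A : Matrix n n ℂ} {B : Matrix n n ℂ} (hB : IsUnit B) :
    (Bᴴ * A * B).PosDef ↔ A.PosDef := by
  refine ⟨fun h => ?_, fun h => myPosDef_conj h hB⟩
  have hBH : IsUnit Bᴴ := by
    rw [Matrix.isUnit_iff_isUnit_det, Matrix.det_conjTranspose]
    exact ((Matrix.isUnit_iff_isUnit_det _).mp hB).star
  have h2 := myPosDef_conj h (Matrix.isUnit_nonsing_inv_iff.mpr hB)
  have key : (B⁻¹)ᴴ * (Bᴴ * A * B) * B⁻¹ = A := by
    rw [Matrix.conjTranspose_nonsing_inv]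
    have e : Bᴴ⁻¹ * (Bᴴ * A * B) * B⁻¹ = Bᴴ⁻¹ * Bᴴ * A * (B * B⁻¹) := by
      noncomm_ring
    rw [e, Matrix.nonsing_inv_mul _ ((Matrix.isUnit_iff_isUnit_det _).mp hBH),
      Matrix.mul_nonsing_inv _ ((Matrix.isUnit_iff_isUnit_det _).mp hB), one_mul, mul_one]
  rwa [key] at h2


lemma myReal (n : ℕ) (hn : 0 < n) (μ : Fin n → ℝ) (lm : ℝ)
    (hge : ∀ i, lm ≤ μ i) (hex : ∃ i, μ i = lm) (φ : ℝ → ℝ)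
    (hφ : ∀ s ∈ Set.Ioi (-lm), φ s = ∑ i, (s + μ i)⁻¹) :
    StrictAntiOn φ (Set.Ioi (-lm)) ∧
    Tendsto φ (𝓝[>] (-lm)) atTop ∧
    Tendsto φ atTop (𝓝 0) ∧
    ∀ γ : ℝ, 0 < γ → ∃! s₀ : ℝ, s₀ ∈ Set.Ioi (-lm) ∧ φ s₀ = γ := by
  have hpos : ∀ s ∈ Set.Ioi (-lm), ∀ i : Fin n, 0 < s + μ i := fun s hs i => by
    have := hge i; simp only [Set.mem_Ioi] at hs; linarith
  -- strict anti
  have hSA : StrictAntiOn φ (Set.Ioi (-lm)) := by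
    intro a ha b hb hab
    rw [hφ a ha, hφ b hb]
    refine Finset.sum_lt_sum_of_nonempty (by simp [Finset.univ_nonempty_iff, Fin.pos_iff_nonempty.mp hn]) ?_
    intro i _
    exact inv_strictAnti₀ (hpos a ha i) (by linarith)
  -- blow up
  obtain ⟨i₀, hi₀⟩ := hex
  have hT : Tendsto φ (𝓝[>] (-lm)) atTop := by
    have h1 : Tendsto (fun s : ℝ => (s + lm)⁻¹) (𝓝[>] (-lm)) atTop := by
      refine tendsto_inv_nhdsGT_zero.comp ?_
      rw [tendsto_nhdsWithin_iff]
      constructor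
      · have : Tendsto (fun s : ℝ => s + lm) (𝓝 (-lm)) (𝓝 (-lm + lm)) :=
          (continuous_id.add continuous_const).tendsto _
        simpa using this.mono_left nhdsWithin_le_nhds
      · filter_upwards [self_mem_nhdsWithin] with s hs
        simp only [Set.mem_Ioi] at hs ⊢; linarith
    refine tendsto_atTop_mono' _ ?_ h1
    filter_upwards [self_mem_nhdsWithin] with s hs
    rw [hφ s hs]
    calc (s + lm)⁻¹ = (s + μ i₀)⁻¹ := by rw [hi₀]
      _ ≤ ∑ i, (s + μ i)⁻¹ :=
        Finset.single_le_sum (f := fun i => (s + μ i)⁻¹)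
          (fun i _ => (inv_pos.mpr (hpos s hs i)).le) (Finset.mem_univ i₀)
  -- vanish
  have hV : Tendsto φ atTop (𝓝 0) := by
    have h2 : Tendsto (fun s : ℝ => ∑ i, (s + μ i)⁻¹) atTop (𝓝 0) := by
      have := tendsto_finset_sum (Finset.univ : Finset (Fin n))
        (f := fun (i : Fin n) (s : ℝ) => (s + μ i)⁻¹) (a := fun _ => (0:ℝ)) (x := atTop)
        (fun i _ => tendsto_inv_atTop_zero.comp (tendsto_atTop_add_const_right _ _ tendsto_id))
      simpa using this
    refine h2.congr' ?_
    filter_upwards [eventually_gt_atTop (-lm)] with s hs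
    exact (hφ s hs).symm
  refine ⟨hSA, hT, hV, ?_⟩
  intro γ hγ
  -- find a with γ ≤ φ a
  have ha' : ∀ᶠ s in 𝓝[>] (-lm), γ ≤ φ s := hT.eventually_ge_atTop γ
  obtain ⟨a, ha1, ha2⟩ := (ha'.and self_mem_nhdsWithin).exists
  -- find b with φ b < γ, b > a
  obtain ⟨b, hb1, hb2⟩ := ((hV.eventually (gt_mem_nhds hγ)).and (eventually_ge_atTop a)).exists
  have hab : a ≤ b := hb2
  have hbI : b ∈ Set.Ioi (-lm) := lt_of_lt_of_le ha2 hab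
  have hcont : ContinuousOn φ (Set.Icc a b) := by
    have hsub : Set.Icc a b ⊆ Set.Ioi (-lm) := fun x hx => lt_of_lt_of_le ha2 hx.1
    refine ContinuousOn.congr (f := fun s => ∑ i, (s + μ i)⁻¹) ?_ (fun x hx => hφ x (hsub hx))
    refine continuousOn_finset_sum _ fun i _ => ?_
    exact (continuousOn_id.add continuousOn_const).inv₀ fun x hx =>
      (hpos x (hsub hx) i).ne'
  have hγmem : γ ∈ Set.Icc (φ b) (φ a) := ⟨hb1.le, ha1⟩
  obtain ⟨s₀, hs₀mem, hs₀⟩ := intermediate_value_Icc' hab hcont hγmem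
  refine ⟨s₀, ⟨lt_of_lt_of_le ha2 hs₀mem.1, hs₀⟩, ?_⟩
  rintro t ⟨htI, htγ⟩
  have hs₀I : s₀ ∈ Set.Ioi (-lm) := lt_of_lt_of_le ha2 hs₀mem.1
  exact hSA.injOn htI hs₀I (by rw [htγ, hs₀])

open scoped MatrixOrder in
lemma myMatrix (M : ℕ) (hM : 0 < M) (A B : Matrix (Fin M) (Fin M) ℂ)
    (hA : A.PosDef) (hB : B.PosSemidef)
    (lm : ℝ)
    (hlm : ∀ s : ℝ,
      ((1 : Matrix (Fin M) (Fin M) ℂ) + (s : ℂ) • A + B).PosDef ↔ -lm < s)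
    (φ : ℝ → ℝ)
    (hφ : ∀ s : ℝ, φ s =
      (A * ((1 : Matrix (Fin M) (Fin M) ℂ) + (s : ℂ) • A + B)⁻¹).trace.re) :
    ∃ μ : Fin M → ℝ,
      (∀ s : ℝ, (∀ i, 0 < s + μ i) ↔ -lm < s) ∧
      (∀ s ∈ Set.Ioi (-lm), φ s = ∑ i, (s + μ i)⁻¹) := by
  classical
  set R := CFC.sqrt A with hRdef
  have hRps : R.PosSemidef := (CFC.sqrt_nonneg A).posSemidef
  have hRH : Rᴴ = R := hRps.1
  have hRR : R * R = A := CFC.sqrt_mul_sqrt_self A hA.posSemidef.nonneg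
  have hAdet : IsUnit A.det := isUnit_iff_ne_zero.mpr hA.det_pos.ne'
  have hRdet : IsUnit R.det := by
    rw [isUnit_iff_ne_zero]
    intro h
    rw [isUnit_iff_ne_zero, ← hRR, Matrix.det_mul, h, mul_zero] at hAdet
    exact hAdet rfl
  have hRunit : IsUnit R := (Matrix.isUnit_iff_isUnit_det _).mpr hRdet
  set S := R⁻¹ * ((1 : Matrix (Fin M) (Fin M) ℂ) + B) * R⁻¹ with hSdef
  have hRinvH : (R⁻¹)ᴴ = R⁻¹ := by rw [Matrix.conjTranspose_nonsing_inv, hRH]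
  have hS : S.IsHermitian := by
    have h1 : ((1 : Matrix (Fin M) (Fin M) ℂ) + B).IsHermitian :=
      Matrix.isHermitian_one.add hB.1
    have := Matrix.isHermitian_conjTranspose_mul_mul (R⁻¹) h1
    rwa [hRinvH] at this
  set μ := hS.eigenvalues with hμdef
  set U := (hS.eigenvectorUnitary : Matrix (Fin M) (Fin M) ℂ) with hUdef
  have hU1 : star U * U = 1 := Matrix.mem_unitaryGroup_iff'.mp hS.eigenvectorUnitary.2
  have hU2 : U * star U = 1 := Matrix.mem_unitaryGroup_iff.mp hS.eigenvectorUnitary.2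
  have hUunit : IsUnit (star U) := ⟨⟨star U, U, hU1, hU2⟩, rfl⟩
  have hspec : S = U * diagonal (RCLike.ofReal ∘ μ) * star U := hS.spectral_theorem
  -- decomposition
  have hC : ∀ s : ℝ, (1 : Matrix (Fin M) (Fin M) ℂ) + (s : ℂ) • A + B
      = R * ((s : ℂ) • 1 + S) * R := by
    intro s
    have h2 : R * S * R = 1 + B := by
      have e : R * (R⁻¹ * ((1 : Matrix (Fin M) (Fin M) ℂ) + B) * R⁻¹) * R
          = (R * R⁻¹) * ((1 : Matrix (Fin M) (Fin M) ℂ) + B) * (R⁻¹ * R) := by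
        noncomm_ring
      rw [hSdef, e, Matrix.mul_nonsing_inv _ hRdet, Matrix.nonsing_inv_mul _ hRdet,
        one_mul, mul_one]
    have h1 : R * ((s : ℂ) • 1) * R = (s : ℂ) • A := by
      rw [Matrix.mul_smul, mul_one, Matrix.smul_mul, hRR]
    calc (1 : Matrix (Fin M) (Fin M) ℂ) + (s : ℂ) • A + B
        = (s : ℂ) • A + (1 + B) := by abel
      _ = R * ((s : ℂ) • 1) * R + R * S * R := by rw [h1, h2]
      _ = R * ((s : ℂ) • 1 + S) * R := by noncomm_ring
  -- diagonalization of s•1 + S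
  have hD : ∀ s : ℝ, (s : ℂ) • (1 : Matrix (Fin M) (Fin M) ℂ) + S
      = U * diagonal (fun i => ((s + μ i : ℝ) : ℂ)) * star U := by
    intro s
    have h1 : (s : ℂ) • (1 : Matrix (Fin M) (Fin M) ℂ) = U * ((s : ℂ) • 1) * star U := by
      rw [Matrix.mul_smul, mul_one, Matrix.smul_mul, hU2]
    conv_lhs => rw [h1, hspec]
    have h2 : (s : ℂ) • (1 : Matrix (Fin M) (Fin M) ℂ) + diagonal (RCLike.ofReal ∘ μ)
        = diagonal (fun i => ((s + μ i : ℝ) : ℂ)) := by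
      rw [Matrix.smul_one_eq_diagonal, Matrix.diagonal_add]
      congr 1
      funext i
      push_cast
      simp [RCLike.ofReal]
    rw [← h2]
    noncomm_ring
  have hXiff : ∀ s : ℝ, ((s : ℂ) • (1 : Matrix (Fin M) (Fin M) ℂ) + S).PosDef
      ↔ ∀ i, 0 < s + μ i := by
    intro s
    rw [hD s]
    have hstar : U * diagonal (fun i => ((s + μ i : ℝ) : ℂ)) * star U
        = (star U)ᴴ * diagonal (fun i => ((s + μ i : ℝ) : ℂ)) * star U := by
      rw [star_eq_conjTranspose, conjTranspose_conjTranspose]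
    rw [hstar, myPosDef_conj_iff hUunit, Matrix.posDef_diagonal_iff]
    constructor
    · intro h i; exact Complex.zero_lt_real.mp (by exact_mod_cast h i)
    · intro h i; exact_mod_cast Complex.zero_lt_real.mpr (h i)
  have hPos : ∀ s : ℝ, ((1 : Matrix (Fin M) (Fin M) ℂ) + (s : ℂ) • A + B).PosDef
      ↔ ∀ i, 0 < s + μ i := by
    intro s
    rw [hC s, show R * ((s : ℂ) • 1 + S) * R = Rᴴ * ((s : ℂ) • 1 + S) * R from by rw [hRH],
      myPosDef_conj_iff hRunit]
    exact hXiff s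
  refine ⟨μ, fun s => (hPos s).symm.trans (hlm s), ?_⟩
  -- trace formula
  intro s hs
  simp only [Set.mem_Ioi] at hs
  have hμpos : ∀ i, 0 < s + μ i := (hPos s).mp ((hlm s).mpr hs)
  have hXpos : ((s : ℂ) • (1 : Matrix (Fin M) (Fin M) ℂ) + S).PosDef := (hXiff s).mpr hμpos
  have hXdet : IsUnit ((s : ℂ) • (1 : Matrix (Fin M) (Fin M) ℂ) + S).det :=
    (Matrix.isUnit_iff_isUnit_det _).mp hXpos.isUnit
  have hUinv : U⁻¹ = star U := Matrix.inv_eq_left_inv hU1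
  have hsUinv : (star U)⁻¹ = U := Matrix.inv_eq_left_inv hU2
  have hXinv : ((s : ℂ) • (1 : Matrix (Fin M) (Fin M) ℂ) + S)⁻¹
      = U * diagonal (fun i => (((s + μ i)⁻¹ : ℝ) : ℂ)) * star U := by
    refine Matrix.inv_eq_left_inv ?_
    rw [hD s]
    have e : U * diagonal (fun i => (((s + μ i)⁻¹ : ℝ) : ℂ)) * star U
        * (U * diagonal (fun i => ((s + μ i : ℝ) : ℂ)) * star U)
        = U * (diagonal (fun i => (((s + μ i)⁻¹ : ℝ) : ℂ)) * (star U * U)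
            * diagonal (fun i => ((s + μ i : ℝ) : ℂ))) * star U := by
      noncomm_ring
    rw [e, hU1, mul_one, Matrix.diagonal_mul_diagonal]
    have e2 : (fun i => (((s + μ i)⁻¹ : ℝ) : ℂ) * ((s + μ i : ℝ) : ℂ)) = fun _ => (1 : ℂ) := by
      funext i
      rw [← Complex.ofReal_mul, inv_mul_cancel₀ (hμpos i).ne']
      simp
    rw [e2, Matrix.diagonal_one, mul_one, hU2]
  -- trace computation
  have htr : (A * ((1 : Matrix (Fin M) (Fin M) ℂ) + (s : ℂ) • A + B)⁻¹).trace
      = ((∑ i, (s + μ i)⁻¹ : ℝ) : ℂ) := by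
    rw [hC s, Matrix.mul_inv_rev, Matrix.mul_inv_rev]
    have e : A * (R⁻¹ * (((s : ℂ) • 1 + S)⁻¹ * R⁻¹))
        = R * (R * R⁻¹) * (((s : ℂ) • 1 + S)⁻¹ * R⁻¹) := by
      rw [← hRR]; noncomm_ring
    rw [e, Matrix.mul_nonsing_inv _ hRdet, mul_one]
    rw [Matrix.trace_mul_comm, mul_assoc, Matrix.nonsing_inv_mul _ hRdet, mul_one]
    rw [hXinv, Matrix.trace_mul_comm, ← mul_assoc, hU1, one_mul, Matrix.trace_diagonal]
    push_cast
    ring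
  rw [hφ s, htr, Complex.ofReal_re]


/-- For `A` Hermitian positive definite and `B` Hermitian positive semidefinite, with
`lm = λ_min(A^{-1/2}(I+B)A^{-1/2})` (characterized by: `I + sA + B` is positive definite
iff `s > -lm`), the map `φ(s) = tr(A (I + sA + B)⁻¹)` is strictly decreasing on
`(-lm, ∞)`, blows up as `s → -lm⁺`, vanishes as `s → ∞`, and hence for every `γ > 0`
the equation `γ = φ(s)` has a unique solution `s₀ ∈ (-lm, ∞)`. -/
theorem stmt_7 (M : ℕ) (hM : 0 < M) (A B : Matrix (Fin M) (Fin M) ℂ)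
    (hA : A.PosDef) (hB : B.PosSemidef)
    (lm : ℝ)
    (hlm : ∀ s : ℝ,
      ((1 : Matrix (Fin M) (Fin M) ℂ) + (s : ℂ) • A + B).PosDef ↔ -lm < s)
    (φ : ℝ → ℝ)
    (hφ : ∀ s : ℝ, φ s =
      (A * ((1 : Matrix (Fin M) (Fin M) ℂ) + (s : ℂ) • A + B)⁻¹).trace.re) :
    StrictAntiOn φ (Set.Ioi (-lm)) ∧
    Tendsto φ (𝓝[>] (-lm)) atTop ∧
    Tendsto φ atTop (𝓝 0) ∧
    ∀ γ : ℝ, 0 < γ → ∃! s₀ : ℝ, s₀ ∈ Set.Ioi (-lm) ∧ φ s₀ = γ := by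
  obtain ⟨μ, hiff, hsum⟩ := myMatrix M hM A B hA hB lm hlm φ hφ
  have hge : ∀ i, lm ≤ μ i := by
    intro i
    by_contra h
    push_neg at h
    have hs : -lm < (-lm - μ i) / 2 := by linarith
    have := (hiff ((-lm - μ i) / 2)).mpr hs i
    linarith
  have hex : ∃ i, μ i = lm := by
    by_contra h
    push_neg at h
    have hne : (Finset.univ : Finset (Fin M)).Nonempty := by
      simpa [Finset.univ_nonempty_iff] using Fin.pos_iff_nonempty.mp hM
    set m := Finset.univ.inf' hne μ with hm
    have hlt : lm < m := by
      rw [hm, Finset.lt_inf'_iff]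
      exact fun i _ => lt_of_le_of_ne (hge i) (Ne.symm (h i))
    have hs : ∀ i, 0 < (-lm - m) / 2 + μ i := by
      intro i
      have := Finset.inf'_le μ (Finset.mem_univ i)
      linarith
    have := (hiff ((-lm - m) / 2)).mp hs
    linarith
  exact myReal M hM μ lm hge hex φ hsum
end

section
/- For any a > 0 and any nonnegative random variable γ with density p, it holds that E[Q(√(aγ))] = (1/(2π)) ∫₀^∞ g((a(1+t))/2) / (√t (1+t)) dt, where g(s) = E[e^{-sγ}] is the Laplace transform of γ and Q(x) = ∫_x^∞ e^{-u²/2} du/√(2π). -/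
open MeasureTheory Real
open Set


-- Step A: Gamma(1/2) scaled integral
lemma auxA {l : ℝ} (hl : 0 < l) :
    ∫ t in Ioi (0:ℝ), Real.exp (-(l*t)) / Real.sqrt t = Real.sqrt π / Real.sqrt l := by
  have h := Real.integral_rpow_mul_exp_neg_mul_Ioi (a := 1/2) (by norm_num) hl
  rw [Real.Gamma_one_half_eq] at h
  have e1 : ∀ t ∈ Ioi (0:ℝ), t ^ ((1:ℝ)/2 - 1) * Real.exp (-(l*t))
      = Real.exp (-(l*t)) / Real.sqrt t := by
    intro t ht
    rw [show (1:ℝ)/2 - 1 = -(1/2) by norm_num, Real.rpow_neg (le_of_lt ht),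
      ← Real.sqrt_eq_rpow]
    ring
  rw [setIntegral_congr_fun measurableSet_Ioi e1] at h
  rw [h, ← Real.sqrt_eq_rpow, one_div, Real.sqrt_inv]
  ring

-- Step B
lemma auxB {l : ℝ} (hl : 0 < l) :
    ∫ s in Ioi (0:ℝ), Real.exp (-(l*s)) = 1 / l := by
  have h := Real.integral_rpow_mul_exp_neg_mul_Ioi (a := 1) (by norm_num) hl
  rw [Real.Gamma_one] at h
  simpa using h

-- Integrability: 1/(√t (1+t)) on Ioi 0
lemma auxDenInt : IntegrableOn (fun t => 1 / (Real.sqrt t * (1+t))) (Ioi (0:ℝ)) := by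
  have hmeas : Measurable fun t : ℝ => 1 / (Real.sqrt t * (1+t)) := by
    apply Measurable.div measurable_const
    exact (Real.continuous_sqrt.measurable).mul (measurable_const.add measurable_id)
  have h1 : IntegrableOn (fun t => 1 / (Real.sqrt t * (1+t))) (Ioc (0:ℝ) 1) := by
    have hi : IntegrableOn (fun t : ℝ => t ^ (-(1/2) : ℝ)) (Ioc (0:ℝ) 1) := by
      have := intervalIntegral.intervalIntegrable_rpow' (a := 0) (b := 1)
        (r := -(1/2)) (by norm_num)
      rwa [intervalIntegrable_iff, uIoc_of_le zero_le_one] at this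
    refine hi.mono' (hmeas.aestronglyMeasurable.restrict) ?_
    filter_upwards [ae_restrict_mem measurableSet_Ioc] with t ht
    have ht0 : 0 < t := ht.1
    have h1t : (0:ℝ) < 1 + t := by linarith
    rw [Real.norm_eq_abs, abs_of_nonneg (by positivity), Real.rpow_neg ht0.le,
      ← Real.sqrt_eq_rpow]
    rw [one_div, inv_le_inv₀ (by positivity) (by positivity)]
    nlinarith [Real.sqrt_pos.mpr ht0]
  have h2 : IntegrableOn (fun t => 1 / (Real.sqrt t * (1+t))) (Ioi (1:ℝ)) := by
    have hi : IntegrableOn (fun t : ℝ => t ^ (-(3/2) : ℝ)) (Ioi (1:ℝ)) :=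
      integrableOn_Ioi_rpow_of_lt (by norm_num) one_pos
    refine hi.mono' (hmeas.aestronglyMeasurable.restrict) ?_
    filter_upwards [ae_restrict_mem measurableSet_Ioi] with t ht
    have ht1 : (1:ℝ) < t := ht
    have ht0 : 0 < t := lt_trans one_pos ht1
    have h1t : (0:ℝ) < 1 + t := by linarith
    rw [Real.norm_eq_abs, abs_of_nonneg (by positivity)]
    rw [show (-(3/2):ℝ) = -1 + -(1/2) by norm_num, Real.rpow_add ht0,
      Real.rpow_neg_one, Real.rpow_neg ht0.le, ← Real.sqrt_eq_rpow]
    rw [one_div, ← mul_inv]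
    have hle : t * Real.sqrt t ≤ Real.sqrt t * (1+t) := by
      nlinarith [Real.sqrt_nonneg t]
    gcongr
  have := h1.union h2
  rwa [Ioc_union_Ioi_eq_Ioi zero_le_one] at this

-- Fubini swap for nonnegative functions on Ioi 0 × Ioi 0
lemma auxSwap (f : ℝ → ℝ → ℝ)
    (hm : AEStronglyMeasurable (Function.uncurry f)
      (((volume : Measure ℝ).restrict (Ioi 0)).prod ((volume : Measure ℝ).restrict (Ioi 0))))
    (h0 : ∀ s ∈ Ioi (0:ℝ), ∀ t ∈ Ioi (0:ℝ), 0 ≤ f s t)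
    (hint : ∀ s ∈ Ioi (0:ℝ), IntegrableOn (fun t => f s t) (Ioi 0))
    (hout : IntegrableOn (fun s => ∫ t in Ioi (0:ℝ), f s t) (Ioi 0)) :
    ∫ s in Ioi (0:ℝ), ∫ t in Ioi (0:ℝ), f s t
      = ∫ t in Ioi (0:ℝ), ∫ s in Ioi (0:ℝ), f s t := by
  have hInt : Integrable (Function.uncurry f)
      (((volume : Measure ℝ).restrict (Ioi 0)).prod ((volume : Measure ℝ).restrict (Ioi 0))) := by
    rw [integrable_prod_iff hm]
    constructor
    · refine (ae_restrict_iff' measurableSet_Ioi).2 (Filter.Eventually.of_forall fun s hs => ?_)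
      exact hint s hs
    · refine hout.congr ?_
      filter_upwards [ae_restrict_mem measurableSet_Ioi] with s hs
      refine setIntegral_congr_fun measurableSet_Ioi fun t ht => ?_
      simp [Real.norm_eq_abs, abs_of_nonneg (h0 s hs t ht)]
  exact integral_integral_swap hInt

-- Step D: substitution u = sqrt(c + 2s)
lemma auxSub {c : ℝ} (hc : 0 < c) :
    ∫ s in Ioi (0:ℝ), Real.exp (-(c/2+s)) * (Real.sqrt π / Real.sqrt (c/2+s))
      = Real.sqrt (2*π) * ∫ u in Ioi (Real.sqrt c), Real.exp (-u^2/2) := by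
  set g : ℝ → ℝ := fun y => Real.exp (-(c/2+y)) * (Real.sqrt π / Real.sqrt (c/2+y)) with hgdef
  set f : ℝ → ℝ := fun u => u^2/2 - c/2 with hfdef
  have hsc : 0 < Real.sqrt c := Real.sqrt_pos.mpr hc
  have hfa : f (Real.sqrt c) = 0 := by simp [hfdef, Real.sq_sqrt hc.le]
  have himg1 : f '' Ici (Real.sqrt c) ⊆ Ici 0 := by
    rintro - ⟨u, hu, rfl⟩
    have hu0 : Real.sqrt c ≤ u := hu
    have : c ≤ u^2 := by nlinarith [Real.sq_sqrt hc.le]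
    simp only [hfdef, mem_Ici]; linarith
  have himg2 : f '' Ioi (Real.sqrt c) ⊆ Ioi 0 := by
    rintro - ⟨u, hu, rfl⟩
    have hu0 : Real.sqrt c < u := hu
    have : c < u^2 := by nlinarith [Real.sq_sqrt hc.le]
    simp only [hfdef, mem_Ioi]; linarith
  have hgmeas : Measurable g := by
    apply Measurable.mul
    · exact (measurable_const.add measurable_id).neg.exp
    · exact Measurable.div measurable_const
        (Real.continuous_sqrt.measurable.comp (measurable_const.add measurable_id))
  have hg_int : IntegrableOn g (Ici (0:ℝ)) := by
    have hexp : IntegrableOn (fun y : ℝ => (Real.sqrt π / Real.sqrt (c/2)) * Real.exp (-y))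
        (Ici (0:ℝ)) := by
      rw [integrableOn_Ici_iff_integrableOn_Ioi]
      refine Integrable.const_mul ?_ _
      have h := exp_neg_integrableOn_Ioi 0 (one_pos (α := ℝ))
      simp only [neg_mul, one_mul] at h
      exact h
    refine hexp.mono' hgmeas.aestronglyMeasurable.restrict ?_
    filter_upwards [ae_restrict_mem measurableSet_Ici] with y hy
    have hy0 : (0:ℝ) ≤ y := hy
    have h2 : (0:ℝ) < c/2 + y := by linarith
    rw [Real.norm_eq_abs, abs_of_nonneg (by positivity)]
    have e1 : Real.exp (-(c/2+y)) ≤ Real.exp (-y) := by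
      apply Real.exp_le_exp.mpr; linarith
    have e2 : Real.sqrt π / Real.sqrt (c/2+y) ≤ Real.sqrt π / Real.sqrt (c/2) :=
      div_le_div_of_nonneg_left (Real.sqrt_nonneg _) (Real.sqrt_pos.mpr (by linarith))
        (Real.sqrt_le_sqrt (by linarith))
    calc Real.exp (-(c/2+y)) * (Real.sqrt π / Real.sqrt (c/2+y))
        ≤ Real.exp (-y) * (Real.sqrt π / Real.sqrt (c/2)) := by
          apply mul_le_mul e1 e2 (by positivity) (by positivity)
      _ = Real.sqrt π / Real.sqrt (c/2) * Real.exp (-y) := by ring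
  have hcomp : ∀ x ∈ Ici (Real.sqrt c), (g ∘ f) x * x = Real.sqrt (2*π) * Real.exp (-x^2/2) := by
    intro x hx
    have hx0 : 0 < x := lt_of_lt_of_le hsc hx
    have e1 : c/2 + f x = x^2/2 := by simp [hfdef]
    have e2 : Real.sqrt (x^2/2) = x / Real.sqrt 2 := by
      rw [show x^2/2 = x^2 / 2 by ring, Real.sqrt_div (by positivity) 2,
        Real.sqrt_sq hx0.le]
    simp only [Function.comp, hgdef, e1, e2]
    rw [Real.sqrt_mul (by norm_num : (0:ℝ) ≤ 2) π]
    have h2 : Real.sqrt 2 > 0 := by positivity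
    field_simp
  have key := integral_comp_mul_deriv_Ioi (f := f) (f' := fun x => x) (g := g)
    (a := Real.sqrt c)
    (by fun_prop)
    (by
      have h1 : Filter.Tendsto (fun u : ℝ => u^2/2) Filter.atTop Filter.atTop := by
        apply Filter.Tendsto.atTop_div_const two_pos
        exact Filter.tendsto_pow_atTop two_ne_zero
      simpa [hfdef, sub_eq_add_neg] using
        Filter.tendsto_atTop_add_const_right Filter.atTop (-(c/2)) h1)
    (fun x hx => by
      have : HasDerivAt f x x := by
        have h := ((hasDerivAt_pow 2 x).div_const 2).sub_const (c/2)
        simpa [hfdef] using h.congr_deriv (by ring)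
      exact this.hasDerivWithinAt)
    ((continuousOn_of_forall_continuousAt (fun y hy => ?_)).mono himg2)
    (hg_int.mono_set himg1)
    ?_
  · rw [hfa] at key
    rw [← key]
    rw [setIntegral_congr_fun measurableSet_Ioi
      (fun x hx => hcomp x (le_of_lt hx))]
    rw [integral_const_mul]
  · -- continuity of g at points of Ioi 0
    have h2 : (0:ℝ) < c/2 + y := by
      have : (0:ℝ) < y := hy
      linarith
    apply ContinuousAt.mul
    · exact (Real.continuous_exp.comp (continuous_const.add continuous_id).neg).continuousAt
    · apply ContinuousAt.div continuousAt_const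
      · exact (Real.continuous_sqrt.comp (continuous_const.add continuous_id)).continuousAt
      · exact (Real.sqrt_pos.mpr h2).ne'
  · -- hg2 integrability
    refine (IntegrableOn.congr_fun ?_ (fun x hx => (hcomp x hx).symm) measurableSet_Ici)
    have : Integrable (fun x : ℝ => Real.sqrt (2*π) * Real.exp (-x^2/2)) := by
      refine Integrable.const_mul ?_ _
      have := integrable_exp_neg_mul_sq (by norm_num : (0:ℝ) < 1/2)
      refine this.congr (Filter.Eventually.of_forall fun x => ?_)
      simp only []
      rw [show -(1/2:ℝ)*x^2 = -x^2/2 by ring]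
    exact this.integrableOn

-- The key Craig-type identity
lemma auxKey {c : ℝ} (hc : 0 < c) :
    ∫ t in Ioi (0:ℝ), Real.exp (-(c*(1+t)/2)) / (Real.sqrt t * (1+t))
      = Real.sqrt (2*π) * ∫ u in Ioi (Real.sqrt c), Real.exp (-u^2/2) := by
  set F : ℝ → ℝ → ℝ :=
    fun t s => Real.exp (-(c*(1+t)/2)) / Real.sqrt t * Real.exp (-((1+t)*s)) with hF
  have hFeq : ∀ t s : ℝ, F t s
      = Real.exp (-(c/2+s)) * (Real.exp (-((c/2+s)*t)) / Real.sqrt t) := by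
    intro t s
    have h : -(c*(1+t)/2) + -((1+t)*s) = -(c/2+s) + -((c/2+s)*t) := by ring
    simp only [hF]
    rw [div_mul_eq_mul_div, ← Real.exp_add, h, Real.exp_add, mul_div_assoc]
  have hinner : ∀ t ∈ Ioi (0:ℝ),
      Real.exp (-(c*(1+t)/2)) / (Real.sqrt t * (1+t)) = ∫ s in Ioi (0:ℝ), F t s := by
    intro t ht
    have ht' : (0:ℝ) < 1 + t := by have := mem_Ioi.mp ht; linarith
    have : ∫ s in Ioi (0:ℝ), F t s
        = Real.exp (-(c*(1+t)/2)) / Real.sqrt t * (1/(1+t)) := by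
      rw [hF, MeasureTheory.integral_const_mul, auxB ht']
    rw [this, mul_one_div, div_div]
  rw [setIntegral_congr_fun measurableSet_Ioi hinner]
  have hswap : ∫ t in Ioi (0:ℝ), ∫ s in Ioi (0:ℝ), F t s
      = ∫ s in Ioi (0:ℝ), ∫ t in Ioi (0:ℝ), F t s := by
    apply auxSwap
    · apply Measurable.aestronglyMeasurable
      apply Measurable.mul
      · apply Measurable.div
        · fun_prop
        · exact Real.continuous_sqrt.measurable.comp measurable_fst
      · fun_prop
    · intro t ht s hs
      have : (0:ℝ) < Real.sqrt t := Real.sqrt_pos.mpr ht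
      rw [hF]
      positivity
    · intro t ht
      rw [hF]
      apply Integrable.const_mul
      have ht' : (0:ℝ) < 1 + t := by have := mem_Ioi.mp ht; linarith
      have := exp_neg_integrableOn_Ioi 0 ht'
      refine this.congr (Filter.Eventually.of_forall fun x => ?_)
      simp only []
      ring_nf
    · have hbase : IntegrableOn
          (fun t => Real.exp (-(c*(1+t)/2)) / (Real.sqrt t * (1+t))) (Ioi (0:ℝ)) := by
        refine auxDenInt.mono' ?_ ?_
        · apply Measurable.aestronglyMeasurable
          apply Measurable.div
          · fun_prop
          · exact (Real.continuous_sqrt.measurable).mul (measurable_const.add measurable_id)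
        · filter_upwards [ae_restrict_mem measurableSet_Ioi] with t ht
          have ht0 : (0:ℝ) < t := ht
          have ht' : (0:ℝ) < 1 + t := by linarith
          have hst : (0:ℝ) < Real.sqrt t := Real.sqrt_pos.mpr ht0
          rw [Real.norm_eq_abs, abs_of_nonneg (by positivity)]
          have he : Real.exp (-(c*(1+t)/2)) ≤ 1 := by
            rw [Real.exp_le_one_iff]
            nlinarith
          calc Real.exp (-(c*(1+t)/2)) / (Real.sqrt t * (1+t))
              ≤ 1 / (Real.sqrt t * (1+t)) := by gcongr
            _ = 1 / (Real.sqrt t * (1+t)) := rfl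
      exact hbase.congr_fun hinner measurableSet_Ioi
  rw [hswap]
  have hmid : ∀ s ∈ Ioi (0:ℝ), ∫ t in Ioi (0:ℝ), F t s
      = Real.exp (-(c/2+s)) * (Real.sqrt π / Real.sqrt (c/2+s)) := by
    intro s hs
    have hl : (0:ℝ) < c/2 + s := by have := mem_Ioi.mp hs; linarith
    rw [show (fun t => F t s) = fun t =>
      Real.exp (-(c/2+s)) * (Real.exp (-((c/2+s)*t)) / Real.sqrt t) from funext fun t => hFeq t s]
    rw [MeasureTheory.integral_const_mul, auxA hl]
  rw [setIntegral_congr_fun measurableSet_Ioi hmid]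
  exact auxSub hc


/-- For a nonnegative random variable with density `p` on `(0,∞)` and Laplace transform
`g(s) = ∫ p(γ) e^{-sγ} dγ`, and `a > 0`,
`E[Q(√(aγ))] = (1/(2π)) ∫₀^∞ g(a(1+t)/2) / (√t (1+t)) dt`,
where `Q(x) = ∫ₓ^∞ e^{-u²/2} du/√(2π)` is the Gaussian tail function. -/
theorem stmt_10 (a : ℝ) (ha : 0 < a) (p : ℝ → ℝ)
    (hp_nonneg : ∀ x, 0 ≤ p x)
    (hp_int : IntegrableOn p (Set.Ioi 0))
    (hp_one : ∫ γ in Set.Ioi (0 : ℝ), p γ = 1)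
    (Q g : ℝ → ℝ)
    (hQ : ∀ x, Q x = ∫ u in Set.Ioi x, Real.exp (-u ^ 2 / 2) / Real.sqrt (2 * Real.pi))
    (hg : ∀ s, g s = ∫ γ in Set.Ioi (0 : ℝ), p γ * Real.exp (-s * γ))
    (hg_fin : ∀ s, 0 ≤ s → IntegrableOn (fun γ => p γ * Real.exp (-s * γ)) (Set.Ioi 0)) :
    (∫ γ in Set.Ioi (0 : ℝ), p γ * Q (Real.sqrt (a * γ)))
      = (1 / (2 * Real.pi)) *
        ∫ t in Set.Ioi (0 : ℝ), g (a * (1 + t) / 2) / (Real.sqrt t * (1 + t)) := by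
  set F : ℝ → ℝ → ℝ :=
    fun t γ => p γ * Real.exp (-(a*(1+t)/2)*γ) / (Real.sqrt t * (1+t)) with hFdef
  have hE1 : ∀ t ∈ Ioi (0:ℝ), g (a * (1 + t) / 2) / (Real.sqrt t * (1 + t))
      = ∫ γ in Ioi (0:ℝ), F t γ := by
    intro t ht
    rw [hg, ← integral_div]
  have hs_nonneg : ∀ t ∈ Ioi (0:ℝ), (0:ℝ) ≤ a * (1+t) / 2 := by
    intro t ht
    have : (0:ℝ) < t := ht
    positivity
  have hg_le : ∀ t ∈ Ioi (0:ℝ), ∫ γ in Ioi (0:ℝ), p γ * Real.exp (-(a*(1+t)/2)*γ) ≤ 1 := by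
    intro t ht
    refine le_trans (setIntegral_mono_on (hg_fin _ (hs_nonneg t ht)) hp_int
      measurableSet_Ioi ?_) (le_of_eq hp_one)
    intro γ hγ
    have hγ0 : (0:ℝ) < γ := hγ
    refine mul_le_of_le_one_right (hp_nonneg γ) ?_
    rw [Real.exp_le_one_iff]
    have := hs_nonneg t ht
    nlinarith
  have hm : AEStronglyMeasurable (Function.uncurry F)
      (((volume : Measure ℝ).restrict (Ioi 0)).prod ((volume : Measure ℝ).restrict (Ioi 0))) := by
    have h1 : AEStronglyMeasurable (fun q : ℝ × ℝ => p q.2)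
        (((volume : Measure ℝ).restrict (Ioi 0)).prod ((volume : Measure ℝ).restrict (Ioi 0))) :=
      hp_int.1.comp_snd
    have h2 : Measurable (fun q : ℝ × ℝ => Real.exp (-(a*(1+q.1)/2)*q.2)) := by fun_prop
    have h3 : Measurable (fun q : ℝ × ℝ => Real.sqrt q.1 * (1+q.1)) :=
      (Real.continuous_sqrt.measurable.comp measurable_fst).mul
        (measurable_const.add measurable_fst)
    have heq : Function.uncurry F = fun q : ℝ × ℝ =>
        p q.2 * Real.exp (-(a*(1+q.1)/2)*q.2) * (Real.sqrt q.1 * (1+q.1))⁻¹ :=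
      funext fun q => div_eq_mul_inv _ _
    rw [heq]
    exact (h1.mul h2.aestronglyMeasurable).mul h3.inv.aestronglyMeasurable
  have hswap : ∫ t in Ioi (0:ℝ), ∫ γ in Ioi (0:ℝ), F t γ
      = ∫ γ in Ioi (0:ℝ), ∫ t in Ioi (0:ℝ), F t γ := by
    apply auxSwap F hm
    · intro t ht γ hγ
      have ht0 : (0:ℝ) < t := ht
      have hden : (0:ℝ) < Real.sqrt t * (1+t) := by
        have := Real.sqrt_pos.mpr ht0
        nlinarith
      exact div_nonneg (mul_nonneg (hp_nonneg γ) (Real.exp_pos _).le) hden.le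
    · intro t ht
      exact Integrable.div_const (hg_fin _ (hs_nonneg t ht)) _
    · have hbase : IntegrableOn (fun t => ∫ γ in Ioi (0:ℝ), F t γ) (Ioi (0:ℝ)) := by
        refine auxDenInt.mono' hm.integral_prod_right' ?_
        filter_upwards [ae_restrict_mem measurableSet_Ioi] with t ht
        have ht0 : (0:ℝ) < t := ht
        have hst : (0:ℝ) < Real.sqrt t := Real.sqrt_pos.mpr ht0
        have hden : (0:ℝ) < Real.sqrt t * (1+t) := by nlinarith
        have hnn : (0:ℝ) ≤ ∫ γ in Ioi (0:ℝ), F t γ := by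
          refine integral_nonneg fun γ => ?_
          exact div_nonneg (mul_nonneg (hp_nonneg γ) (Real.exp_pos _).le) hden.le
        rw [Real.norm_eq_abs, abs_of_nonneg hnn, hFdef]
        have : ∫ γ in Ioi (0:ℝ), p γ * Real.exp (-(a*(1+t)/2)*γ) / (Real.sqrt t * (1+t))
            = (∫ γ in Ioi (0:ℝ), p γ * Real.exp (-(a*(1+t)/2)*γ)) / (Real.sqrt t * (1+t)) :=
          integral_div _ _
        rw [this]
        have hle := hg_le t ht
        rw [one_div]
        rw [div_le_iff₀ hden]
        calc (∫ γ in Ioi (0:ℝ), p γ * Real.exp (-(a*(1+t)/2)*γ)) ≤ 1 := hle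
          _ = (Real.sqrt t * (1+t))⁻¹ * (Real.sqrt t * (1+t)) := by
              rw [inv_mul_cancel₀ hden.ne']
      exact hbase
  have hE3 : ∀ γ ∈ Ioi (0:ℝ), ∫ t in Ioi (0:ℝ), F t γ
      = p γ * (2 * π * Q (Real.sqrt (a*γ))) := by
    intro γ hγ
    have hγ0 : (0:ℝ) < γ := hγ
    have hc : (0:ℝ) < a * γ := by positivity
    have e1 : ∀ t : ℝ, F t γ
        = p γ * (Real.exp (-((a*γ)*(1+t)/2)) / (Real.sqrt t * (1+t))) := by
      intro t
      simp only [hFdef]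
      have : -(a*(1+t)/2)*γ = -((a*γ)*(1+t)/2) := by ring
      rw [this, mul_div_assoc]
    rw [show (fun t => F t γ) = fun t =>
      p γ * (Real.exp (-((a*γ)*(1+t)/2)) / (Real.sqrt t * (1+t))) from funext e1]
    rw [MeasureTheory.integral_const_mul, auxKey hc]
    have hQv : Q (Real.sqrt (a*γ))
        = (∫ u in Ioi (Real.sqrt (a*γ)), Real.exp (-u^2/2)) / Real.sqrt (2*π) := by
      rw [hQ, ← integral_div]
    have h2π : Real.sqrt (2*π) * Real.sqrt (2*π) = 2*π :=
      Real.mul_self_sqrt (by positivity)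
    have hne : Real.sqrt (2*π) ≠ 0 := by positivity
    rw [hQv, ← h2π]
    field_simp
    ring_nf
    rw [Real.sqrt_sq (Real.sqrt_nonneg (π*2))]
  calc (∫ γ in Ioi (0 : ℝ), p γ * Q (Real.sqrt (a * γ)))
      = (1/(2*π)) * ∫ γ in Ioi (0:ℝ), p γ * (2 * π * Q (Real.sqrt (a*γ))) := by
        rw [show (fun γ => p γ * (2 * π * Q (Real.sqrt (a*γ))))
          = fun γ => (2*π) * (p γ * Q (Real.sqrt (a*γ))) from funext fun γ => by ring]
        rw [MeasureTheory.integral_const_mul]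
        rw [← mul_assoc, one_div, inv_mul_cancel₀ (by positivity : (2*π:ℝ) ≠ 0), one_mul]
    _ = (1/(2*π)) * ∫ γ in Ioi (0:ℝ), ∫ t in Ioi (0:ℝ), F t γ := by
        rw [setIntegral_congr_fun measurableSet_Ioi hE3]
    _ = (1/(2*π)) * ∫ t in Ioi (0:ℝ), ∫ γ in Ioi (0:ℝ), F t γ := by rw [hswap]
    _ = (1 / (2 * Real.pi)) *
        ∫ t in Set.Ioi (0 : ℝ), g (a * (1 + t) / 2) / (Real.sqrt t * (1 + t)) := by
        rw [setIntegral_congr_fun measurableSet_Ioi hE1]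
end
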